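/- For any α > 0, β ∈ ℝ, and a > 0, the equation š_β(κ) − K₀(2κa) − 2φ_a(κ) = 0 has exactly one solution in (α/2, ∞). -/

import Mathlib

open Real MeasureTheory Set Filter Topology

noncomputable def sBeta (β κ : ℝ) : ℝ :=
  β + (1 / (2 * π)) * (Real.log (κ / 2) + Real.eulerMascheroniConstant)

noncomputable def phiA (α a κ : ℝ) : ℝ :=
  (α / (4 * π)) * ∫ p : ℝ,
    Real.exp (-2 * a * Real.sqrt (p ^ 2 + κ ^ 2)) /
      ((2 * Real.sqrt (p ^ 2 + κ ^ 2) - α) * Real.sqrt (p ^ 2 + κ ^ 2))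

noncomputable def phi0 (α κ : ℝ) : ℝ :=
  (α / (4 * π)) * ∫ p : ℝ,
    1 / ((2 * Real.sqrt (p ^ 2 + κ ^ 2) - α) * Real.sqrt (p ^ 2 + κ ^ 2))

noncomputable def besselK0 (x : ℝ) : ℝ := ∫ t in Set.Ioi (0:ℝ), Real.exp (-x * Real.cosh t)

noncomputable def psiA (α a κ : ℝ) : ℝ :=
  (α / π) * ∫ p in Set.Ioi (0:ℝ),
    p * Real.exp (-2 * a * Real.sqrt (p ^ 2 + κ ^ 2)) /
      ((2 * Real.sqrt (p ^ 2 + κ ^ 2) - α) * Real.sqrt (p ^ 2 + κ ^ 2))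

noncomputable def psiC (α a κ : ℝ) : ℝ :=
  (α / π) * ∫ t in Set.Ioi κ, Real.exp (-2 * t * a) / (2 * t - α)

/-! ### Auxiliary lemmas -/

namespace Stmt13Aux

/-- The integrand of `phiA`. -/
noncomputable def fI (α a κ p : ℝ) : ℝ :=
  Real.exp (-2 * a * Real.sqrt (p ^ 2 + κ ^ 2)) /
    ((2 * Real.sqrt (p ^ 2 + κ ^ 2) - α) * Real.sqrt (p ^ 2 + κ ^ 2))

lemma phiA_eq (α a κ : ℝ) : phiA α a κ = (α / (4 * π)) * ∫ p : ℝ, fI α a κ p := rfl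

lemma kappa_le_s {κ p : ℝ} (hκ : 0 ≤ κ) : κ ≤ Real.sqrt (p ^ 2 + κ ^ 2) :=
  Real.le_sqrt_of_sq_le (by nlinarith)

lemma s_le_add {κ p : ℝ} (hκ : 0 ≤ κ) (hp : 0 ≤ p) : Real.sqrt (p ^ 2 + κ ^ 2) ≤ p + κ := by
  rw [show p + κ = Real.sqrt ((p + κ) ^ 2) from (Real.sqrt_sq (by positivity)).symm]
  exact Real.sqrt_le_sqrt (by nlinarith)

lemma s_pos {κ p : ℝ} (hκ : 0 < κ) : 0 < Real.sqrt (p ^ 2 + κ ^ 2) :=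
  lt_of_lt_of_le hκ (kappa_le_s hκ.le)

lemma denom_pos {α κ : ℝ} (hα : 0 < α) (hκ : α / 2 < κ) (p : ℝ) :
    0 < (2 * Real.sqrt (p ^ 2 + κ ^ 2) - α) * Real.sqrt (p ^ 2 + κ ^ 2) := by
  have hκ0 : 0 < κ := lt_trans (by positivity) hκ
  have h1 := kappa_le_s (p := p) hκ0.le
  have h2 := s_pos (p := p) hκ0
  have : 0 < 2 * Real.sqrt (p ^ 2 + κ ^ 2) - α := by nlinarith
  positivity

lemma fI_pos {α a κ : ℝ} (hα : 0 < α) (hκ : α / 2 < κ) (p : ℝ) : 0 < fI α a κ p :=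
  div_pos (Real.exp_pos _) (denom_pos hα hκ p)

lemma continuous_s (κ : ℝ) : Continuous fun p : ℝ => Real.sqrt (p ^ 2 + κ ^ 2) :=
  ((continuous_pow 2).add continuous_const).sqrt

lemma continuous_fI {α a κ : ℝ} (hα : 0 < α) (hκ : α / 2 < κ) :
    Continuous fun p => fI α a κ p := by
  apply Continuous.div
  · exact (continuous_const.mul (continuous_s κ)).rexp
  · exact ((continuous_const.mul (continuous_s κ)).sub continuous_const).mul (continuous_s κ)
  · exact fun p => (denom_pos hα hκ p).ne'

/-- Integrable dominating bound. -/
lemma fI_le_bound {α a κ : ℝ} (hα : 0 < α) (ha : 0 < a) (hκ : α / 2 < κ) (p : ℝ) :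
    fI α a κ p ≤ (κ / ((2 * κ - α) * min 1 (κ ^ 2))) * (1 + p ^ 2)⁻¹ := by
  have hκ0 : 0 < κ := lt_trans (by positivity) hκ
  have hs := s_pos (p := p) hκ0
  have hks := kappa_le_s (p := p) hκ0.le
  have hsq : Real.sqrt (p ^ 2 + κ ^ 2) ^ 2 = p ^ 2 + κ ^ 2 := Real.sq_sqrt (by positivity)
  have hmin : min 1 (κ ^ 2) * (1 + p ^ 2) ≤ p ^ 2 + κ ^ 2 := by
    rcases le_total (1:ℝ) (κ ^ 2) with h | h
    · rw [min_eq_left h]; nlinarith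
    · rw [min_eq_right h]; nlinarith [sq_nonneg p, sq_nonneg (p * κ)]
  have hmin0 : 0 < min 1 (κ ^ 2) := lt_min one_pos (by positivity)
  have hnum : Real.exp (-2 * a * Real.sqrt (p ^ 2 + κ ^ 2)) ≤ 1 := by
    rw [Real.exp_le_one_iff]; nlinarith
  have hden : ((2 * κ - α) * min 1 (κ ^ 2) / κ) * (1 + p ^ 2) ≤
      (2 * Real.sqrt (p ^ 2 + κ ^ 2) - α) * Real.sqrt (p ^ 2 + κ ^ 2) := by
    have h1 : 2 * Real.sqrt (p ^ 2 + κ ^ 2) - α ≥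
        Real.sqrt (p ^ 2 + κ ^ 2) * (2 * κ - α) / κ := by
      rw [ge_iff_le, div_le_iff₀ hκ0]; nlinarith
    have h2 : Real.sqrt (p ^ 2 + κ ^ 2) * (2 * κ - α) / κ * Real.sqrt (p ^ 2 + κ ^ 2)
        = (2 * κ - α) / κ * (p ^ 2 + κ ^ 2) := by
      field_simp; nlinarith
    calc ((2 * κ - α) * min 1 (κ ^ 2) / κ) * (1 + p ^ 2)
        ≤ (2 * κ - α) / κ * (p ^ 2 + κ ^ 2) := by
          rw [div_mul_eq_mul_div, div_mul_eq_mul_div, div_le_div_iff₀ hκ0 hκ0]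
          have hc : 0 < 2 * κ - α := by linarith
          have hmul := mul_le_mul_of_nonneg_left hmin (by positivity : (0:ℝ) ≤ (2 * κ - α) * κ)
          nlinarith
      _ = Real.sqrt (p ^ 2 + κ ^ 2) * (2 * κ - α) / κ * Real.sqrt (p ^ 2 + κ ^ 2) := h2.symm
      _ ≤ (2 * Real.sqrt (p ^ 2 + κ ^ 2) - α) * Real.sqrt (p ^ 2 + κ ^ 2) := by
          apply mul_le_mul_of_nonneg_right _ hs.le
          exact h1
  have hcpos : 0 < (2 * κ - α) * min 1 (κ ^ 2) / κ := by
    have : 0 < 2 * κ - α := by linarith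
    positivity
  have hquot : fI α a κ p ≤ 1 / (((2 * κ - α) * min 1 (κ ^ 2) / κ) * (1 + p ^ 2)) :=
    div_le_div₀ zero_le_one hnum (by positivity) hden
  refine le_trans hquot (le_of_eq ?_)
  rw [eq_comm, eq_div_iff (by positivity)]
  field_simp
  rw [div_eq_one_iff_eq]
  · have hc : 0 < 2 * κ - α := by linarith
    intro h; linarith

lemma integrable_fI {α a κ : ℝ} (hα : 0 < α) (ha : 0 < a) (hκ : α / 2 < κ) :
    Integrable (fun p => fI α a κ p) := by
  have hbound : Integrable (fun p : ℝ =>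
      (κ / ((2 * κ - α) * min 1 (κ ^ 2))) * (1 + p ^ 2)⁻¹) :=
    integrable_inv_one_add_sq.const_mul _
  refine hbound.mono ((continuous_fI hα hκ).aestronglyMeasurable) ?_
  filter_upwards with p
  rw [Real.norm_eq_abs, Real.norm_eq_abs, abs_of_pos (fI_pos hα hκ p)]
  refine le_trans (fI_le_bound hα ha hκ p) (le_abs_self _)

lemma fI_antitone {α a κ₁ κ₂ : ℝ} (hα : 0 < α) (ha : 0 < a) (h1 : α / 2 < κ₁)
    (h12 : κ₁ ≤ κ₂) (p : ℝ) : fI α a κ₂ p ≤ fI α a κ₁ p := by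
  have hκ1 : 0 < κ₁ := lt_trans (by positivity) h1
  have hκ2 : 0 < κ₂ := lt_of_lt_of_le hκ1 h12
  have hs12 : Real.sqrt (p ^ 2 + κ₁ ^ 2) ≤ Real.sqrt (p ^ 2 + κ₂ ^ 2) :=
    Real.sqrt_le_sqrt (by nlinarith)
  have h2 : α / 2 < κ₂ := lt_of_lt_of_le h1 h12
  have hd1 := denom_pos hα h1 p
  have hd2 := denom_pos hα h2 p
  have hs1 := s_pos (p := p) hκ1
  have hks1 := kappa_le_s (p := p) hκ1.le
  apply div_le_div₀ (Real.exp_pos _).le _ hd1 _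
  · exact Real.exp_le_exp.2 (by nlinarith)
  · nlinarith

lemma phiA_nonneg {α a κ : ℝ} (hα : 0 < α) (hκ : α / 2 < κ) : 0 ≤ phiA α a κ := by
  rw [phiA_eq]
  have h1 : 0 ≤ ∫ p : ℝ, fI α a κ p :=
    integral_nonneg fun p => (fI_pos hα hκ p).le
  have : (0:ℝ) ≤ α / (4 * π) := by positivity
  positivity

lemma phiA_antitone {α a κ₁ κ₂ : ℝ} (hα : 0 < α) (ha : 0 < a) (h1 : α / 2 < κ₁)
    (h12 : κ₁ ≤ κ₂) : phiA α a κ₂ ≤ phiA α a κ₁ := by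
  rw [phiA_eq, phiA_eq]
  have h2 : α / 2 < κ₂ := lt_of_lt_of_le h1 h12
  apply mul_le_mul_of_nonneg_left _ (by positivity)
  exact integral_mono (integrable_fI hα ha h2) (integrable_fI hα ha h1)
    (fun p => fI_antitone hα ha h1 h12 p)

lemma continuousAt_phiA {α a κ₀ : ℝ} (hα : 0 < α) (ha : 0 < a) (hκ : α / 2 < κ₀) :
    ContinuousAt (fun κ => phiA α a κ) κ₀ := by
  have hm : α / 2 < (α / 2 + κ₀) / 2 := by linarith
  set m := (α / 2 + κ₀) / 2 with hm_def
  have hmκ : m < κ₀ := by rw [hm_def]; linarith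
  simp only [phiA_eq]
  refine ContinuousAt.mul continuousAt_const ?_
  apply continuousAt_of_dominated (bound := fun p => fI α a m p)
    (F := fun κ p => fI α a κ p)
  · filter_upwards [eventually_gt_nhds hmκ] with κ hκ'
    exact (continuous_fI hα (lt_trans hm hκ')).aestronglyMeasurable
  · filter_upwards [eventually_gt_nhds hmκ] with κ hκ'
    filter_upwards with p
    rw [Real.norm_eq_abs, abs_of_pos (fI_pos hα (lt_trans hm hκ') p)]
    exact fI_antitone hα ha hm hκ'.le p
  · exact integrable_fI hα ha hm
  · filter_upwards with p
    have hsκ : Continuous fun κ : ℝ => Real.sqrt (p ^ 2 + κ ^ 2) :=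
      (continuous_const.add (continuous_pow 2)).sqrt
    have hden : (2 * Real.sqrt (p ^ 2 + κ₀ ^ 2) - α) * Real.sqrt (p ^ 2 + κ₀ ^ 2) ≠ 0 :=
      (denom_pos hα hκ p).ne'
    exact ContinuousAt.div ((continuous_const.mul hsκ).rexp.continuousAt)
      ((((continuous_const.mul hsκ).sub continuous_const).mul hsκ).continuousAt) hden

lemma integrableOn_K0 {x : ℝ} (hx : 0 < x) :
    IntegrableOn (fun t => Real.exp (-x * Real.cosh t)) (Set.Ioi (0:ℝ)) := by
  apply Integrable.mono (exp_neg_integrableOn_Ioi 0 hx)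
  · exact (Real.continuous_exp.comp (continuous_const.mul Real.continuous_cosh)).aestronglyMeasurable
  · filter_upwards [ae_restrict_mem measurableSet_Ioi] with t ht
    rw [Real.norm_eq_abs, Real.norm_eq_abs, abs_of_pos (Real.exp_pos _),
      abs_of_pos (Real.exp_pos _), Real.exp_le_exp]
    have h1 : t ≤ Real.cosh t :=
      le_trans (le_of_lt ((Real.self_lt_sinh_iff).2 ht)) (Real.sinh_lt_cosh t).le
    nlinarith

lemma besselK0_nonneg (x : ℝ) : 0 ≤ besselK0 x :=
  setIntegral_nonneg measurableSet_Ioi fun t _ => (Real.exp_pos _).le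

lemma besselK0_anti {x y : ℝ} (hx : 0 < x) (hxy : x ≤ y) : besselK0 y ≤ besselK0 x := by
  apply setIntegral_mono_on (integrableOn_K0 (lt_of_lt_of_le hx hxy)) (integrableOn_K0 hx)
    measurableSet_Ioi
  intro t _
  have := Real.cosh_pos (x := t)
  exact Real.exp_le_exp.2 (by nlinarith)

lemma continuousAt_K0 {x₀ : ℝ} (hx : 0 < x₀) : ContinuousAt besselK0 x₀ := by
  have h2 : (0:ℝ) < x₀ / 2 := by linarith
  apply continuousAt_of_dominated (bound := fun t => Real.exp (-(x₀ / 2) * Real.cosh t))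
    (F := fun x t => Real.exp (-x * Real.cosh t))
  · filter_upwards with x
    exact (Real.continuous_exp.comp
      (continuous_const.mul Real.continuous_cosh)).aestronglyMeasurable
  · filter_upwards [eventually_gt_nhds (half_lt_self hx)] with x hx'
    filter_upwards with t
    rw [Real.norm_eq_abs, abs_of_pos (Real.exp_pos _), Real.exp_le_exp]
    have := Real.cosh_pos (x := t)
    nlinarith
  · exact integrableOn_K0 h2
  · filter_upwards with t
    exact ((continuous_neg.mul continuous_const).rexp).continuousAt

lemma phiA_lower {α a κ : ℝ} (hα : 0 < α) (ha : 0 < a) (hκ : α / 2 < κ)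
    (hκ' : κ ≤ α / 2 + 1) :
    (α / (4 * π)) * (Real.exp (-2 * a * (α / 2 + 2)) / (α / 2 + 2) / 2) *
      (Real.log (2 * κ - α + 2) - Real.log (2 * κ - α)) ≤ phiA α a κ := by
  have hκ0 : 0 < κ := lt_trans (by positivity) hκ
  set c : ℝ := 2 * κ - α with hc_def
  have hc : 0 < c := by simp only [hc_def]; linarith
  set c₀ : ℝ := Real.exp (-2 * a * (α / 2 + 2)) / (α / 2 + 2) with hc0_def
  have hc₀ : 0 < c₀ := by positivity
  -- pointwise bound on [0, 1]
  have hpt : ∀ p ∈ Set.Icc (0:ℝ) 1, c₀ / (2 * p + c) ≤ fI α a κ p := by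
    intro p hp
    obtain ⟨hp0, hp1⟩ := hp
    have hs := s_pos (p := p) hκ0
    have hks := kappa_le_s (p := p) hκ0.le
    have hsle : Real.sqrt (p ^ 2 + κ ^ 2) ≤ α / 2 + 2 :=
      le_trans (s_le_add hκ0.le hp0) (by linarith)
    have h2pc : 0 < 2 * p + c := by linarith
    have hd := denom_pos hα hκ p
    have key : Real.exp (-2 * a * (α / 2 + 2)) / ((α / 2 + 2) * (2 * p + c)) ≤ fI α a κ p := by
      apply div_le_div₀ (Real.exp_pos _).le
      · exact Real.exp_le_exp.2 (by nlinarith)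
      · exact hd
      · have h1 : 2 * Real.sqrt (p ^ 2 + κ ^ 2) - α ≤ 2 * p + c := by
          have := s_le_add (κ := κ) (p := p) hκ0.le hp0
          simp only [hc_def]; nlinarith
        calc (2 * Real.sqrt (p ^ 2 + κ ^ 2) - α) * Real.sqrt (p ^ 2 + κ ^ 2)
            ≤ (2 * p + c) * (α / 2 + 2) := by
              apply mul_le_mul h1 hsle hs.le h2pc.le
          _ = (α / 2 + 2) * (2 * p + c) := by ring
    refine le_trans (le_of_eq ?_) key
    rw [hc0_def, div_div]
  -- value of the comparison integral
  have hderiv : ∀ p ∈ Set.uIcc (0:ℝ) 1,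
      HasDerivAt (fun q => c₀ / 2 * Real.log (2 * q + c)) (c₀ / (2 * p + c)) p := by
    intro p hp
    rw [Set.uIcc_of_le zero_le_one] at hp
    have h2pc : 0 < 2 * p + c := by have := hp.1; linarith
    have h0 : HasDerivAt (fun q : ℝ => 2 * q + c) 2 p := by
      simpa using ((hasDerivAt_id p).const_mul (2:ℝ)).add_const c
    have h1 := (h0.log h2pc.ne').const_mul (c₀ / 2)
    exact h1.congr_deriv (by ring)
  have hcont : ContinuousOn (fun p : ℝ => c₀ / (2 * p + c)) (Set.uIcc 0 1) := by
    apply ContinuousOn.div continuousOn_const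
      ((continuous_const.mul continuous_id).add continuous_const).continuousOn
    intro p hp
    rw [Set.uIcc_of_le zero_le_one] at hp
    have := hp.1
    show 2 * p + c ≠ 0
    exact (by linarith : (0:ℝ) < 2 * p + c).ne'
  have hIcmp : IntervalIntegrable (fun p => c₀ / (2 * p + c)) volume 0 1 :=
    hcont.intervalIntegrable
  have hval : ∫ p in (0:ℝ)..1, c₀ / (2 * p + c)
      = c₀ / 2 * Real.log (2 * 1 + c) - c₀ / 2 * Real.log (2 * 0 + c) :=
    intervalIntegral.integral_eq_sub_of_hasDerivAt hderiv hIcmp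
  have hIfI : IntervalIntegrable (fun p => fI α a κ p) volume 0 1 :=
    (integrable_fI hα ha hκ).intervalIntegrable
  have hmono : ∫ p in (0:ℝ)..1, c₀ / (2 * p + c) ≤ ∫ p in (0:ℝ)..1, fI α a κ p := by
    apply intervalIntegral.integral_mono_on zero_le_one hIcmp hIfI hpt
  have hsub : ∫ p in (0:ℝ)..1, fI α a κ p ≤ ∫ p : ℝ, fI α a κ p := by
    rw [intervalIntegral.integral_of_le zero_le_one]
    apply setIntegral_le_integral (integrable_fI hα ha hκ)
    filter_upwards with p using (fI_pos hα hκ p).le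
  have hfinal : c₀ / 2 * (Real.log (c + 2) - Real.log c) ≤ ∫ p : ℝ, fI α a κ p := by
    have : c₀ / 2 * (Real.log (c + 2) - Real.log c)
        = c₀ / 2 * Real.log (2 * 1 + c) - c₀ / 2 * Real.log (2 * 0 + c) := by
      rw [show (2:ℝ) * 1 + c = c + 2 by ring, show (2:ℝ) * 0 + c = c by ring]; ring
    rw [this, ← hval]
    exact le_trans hmono hsub
  rw [phiA_eq]
  calc (α / (4 * π)) * (Real.exp (-2 * a * (α / 2 + 2)) / (α / 2 + 2) / 2) *
        (Real.log (2 * κ - α + 2) - Real.log (2 * κ - α))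
      = (α / (4 * π)) * (c₀ / 2 * (Real.log (c + 2) - Real.log c)) := by
        rw [hc0_def, hc_def]; ring
    _ ≤ (α / (4 * π)) * ∫ p : ℝ, fI α a κ p := by
        apply mul_le_mul_of_nonneg_left hfinal (by positivity)

lemma sBeta_lt {β x y : ℝ} (hx : 0 < x) (hxy : x < y) : sBeta β x < sBeta β y := by
  unfold sBeta
  have hπ : 0 < π := Real.pi_pos
  have hlog : Real.log (x / 2) < Real.log (y / 2) :=
    Real.log_lt_log (by positivity) (by linarith)
  have := mul_lt_mul_of_pos_left (add_lt_add_right hlog Real.eulerMascheroniConstant)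
    (show (0:ℝ) < 1 / (2 * π) by positivity)
  linarith

lemma sBeta_le {β x y : ℝ} (hx : 0 < x) (hxy : x ≤ y) : sBeta β x ≤ sBeta β y := by
  rcases eq_or_lt_of_le hxy with rfl | h
  · exact le_rfl
  · exact (sBeta_lt hx h).le

lemma continuousAt_sBeta {β κ₀ : ℝ} (hκ : 0 < κ₀) : ContinuousAt (fun κ => sBeta β κ) κ₀ := by
  unfold sBeta
  have h1 : ContinuousAt (fun κ : ℝ => Real.log (κ / 2)) κ₀ :=
    (Real.continuousAt_log (by positivity)).comp ((continuous_id.div_const 2).continuousAt)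
  exact continuousAt_const.add (continuousAt_const.mul
    (h1.add continuousAt_const))

end Stmt13Aux

open Stmt13Aux

theorem stmt13 (α β a : ℝ) (hα : 0 < α) (ha : 0 < a) :
    ∃! κ : ℝ, κ ∈ Set.Ioi (α / 2) ∧
      sBeta β κ - besselK0 (2 * κ * a) - 2 * phiA α a κ = 0 := by
  have hπ : 0 < π := Real.pi_pos
  set F : ℝ → ℝ := fun κ => sBeta β κ - besselK0 (2 * κ * a) - 2 * phiA α a κ with hF_def
  have hα2 : (0:ℝ) < α / 2 := by positivity
  -- strict monotonicity of F on Ioi (α/2)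
  have hmono : StrictMonoOn F (Set.Ioi (α / 2)) := by
    intro x hx y hy hxy
    simp only [Set.mem_Ioi] at hx hy
    have hx0 : 0 < x := lt_trans hα2 hx
    have h1 : sBeta β x < sBeta β y := sBeta_lt hx0 hxy
    have h2 : besselK0 (2 * y * a) ≤ besselK0 (2 * x * a) :=
      besselK0_anti (by positivity) (by nlinarith)
    have h3 : phiA α a y ≤ phiA α a x := phiA_antitone hα ha hx hxy.le
    simp only [hF_def]
    linarith
  -- continuity of F at points of Ioi (α/2)
  have hcontAt : ∀ κ₀ ∈ Set.Ioi (α / 2), ContinuousAt F κ₀ := by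
    intro κ₀ hκ₀
    simp only [Set.mem_Ioi] at hκ₀
    have hκ0 : 0 < κ₀ := lt_trans hα2 hκ₀
    have h1 : ContinuousAt (fun κ => sBeta β κ) κ₀ := continuousAt_sBeta hκ0
    have h2 : ContinuousAt (fun κ => besselK0 (2 * κ * a)) κ₀ :=
      (continuousAt_K0 (by positivity)).comp
        (((continuous_const.mul continuous_id).mul continuous_const).continuousAt)
    have h3 : ContinuousAt (fun κ => phiA α a κ) κ₀ := continuousAt_phiA hα ha hκ₀
    exact (h1.sub h2).sub (continuousAt_const.mul h3)
  -- negative point κ₁ near α/2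
  set C₁ : ℝ := (α / (4 * π)) * (Real.exp (-2 * a * (α / 2 + 2)) / (α / 2 + 2) / 2) with hC₁_def
  have hC₁ : 0 < C₁ := by positivity
  set S : ℝ := sBeta β (α / 2 + 1) with hS_def
  set T : ℝ := |S| / (2 * C₁) + 1 with hT_def
  have hT : 0 < T := by have := abs_nonneg S; positivity
  set ε : ℝ := Real.exp (-T) with hε_def
  have hε : 0 < ε := Real.exp_pos _
  have hε1 : ε < 1 := Real.exp_lt_one_iff.2 (by linarith)
  set κ₁ : ℝ := α / 2 + ε / 2 with hκ₁_def
  have hκ₁mem : α / 2 < κ₁ := by simp only [hκ₁_def]; linarith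
  have hκ₁le : κ₁ ≤ α / 2 + 1 := by simp only [hκ₁_def]; linarith
  have hκ₁neg : F κ₁ < 0 := by
    have hlow := phiA_lower hα ha hκ₁mem hκ₁le
    rw [← hC₁_def] at hlow
    have he1 : 2 * κ₁ - α = ε := by simp only [hκ₁_def]; ring
    rw [he1] at hlow
    have he2 : Real.log ε = -T := by rw [hε_def, Real.log_exp]
    rw [he2] at hlow
    have he3 : 0 ≤ Real.log (ε + 2) := Real.log_nonneg (by linarith)
    have he4 : C₁ * T ≤ C₁ * (Real.log (ε + 2) - -T) :=
      mul_le_mul_of_nonneg_left (by linarith) hC₁.le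
    have hphi : C₁ * T ≤ phiA α a κ₁ := le_trans he4 hlow
    have hsb : sBeta β κ₁ ≤ S := sBeta_le (lt_trans hα2 hκ₁mem) hκ₁le
    have hK0 : 0 ≤ besselK0 (2 * κ₁ * a) := besselK0_nonneg _
    have hCT : C₁ * T = |S| / 2 + C₁ := by
      rw [hT_def]; field_simp
    have habs : S ≤ |S| := le_abs_self S
    simp only [hF_def]
    have hstep : sBeta β κ₁ - besselK0 (2 * κ₁ * a) - 2 * phiA α a κ₁
        ≤ S - 2 * (C₁ * T) := by linarith
    rw [hCT] at hstep
    linarith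
  -- positive point κ₂ far out
  set κr : ℝ := α / 2 + 1 with hκr_def
  have hκrmem : α / 2 < κr := by simp only [hκr_def]; linarith
  set R : ℝ := besselK0 (2 * κr * a) + 2 * phiA α a κr with hR_def
  set E : ℝ := Real.exp (2 * π * (R - β) - Real.eulerMascheroniConstant + 1) with hE_def
  have hE : 0 < E := Real.exp_pos _
  set κ₂ : ℝ := max κr (2 * E) with hκ₂_def
  have hκ₂r : κr ≤ κ₂ := le_max_left _ _
  have hκ₂mem : α / 2 < κ₂ := lt_of_lt_of_le hκrmem hκ₂r
  have hκ₂pos : F κ₂ > 0 := by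
    have h2 : besselK0 (2 * κ₂ * a) ≤ besselK0 (2 * κr * a) := by
      have : 0 < κr := lt_trans hα2 hκrmem
      exact besselK0_anti (by positivity) (by nlinarith)
    have h3 : phiA α a κ₂ ≤ phiA α a κr := phiA_antitone hα ha hκrmem hκ₂r
    have h4 : E ≤ κ₂ / 2 := by
      have : 2 * E ≤ κ₂ := le_max_right _ _
      linarith
    have h5 : 2 * π * (R - β) - Real.eulerMascheroniConstant + 1 ≤ Real.log (κ₂ / 2) := by
      calc 2 * π * (R - β) - Real.eulerMascheroniConstant + 1 = Real.log E := by
            rw [hE_def, Real.log_exp]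
        _ ≤ Real.log (κ₂ / 2) := Real.log_le_log hE h4
    have h6 : R + 1 / (2 * π) ≤ sBeta β κ₂ := by
      unfold sBeta
      have h7 : (1 / (2 * π)) * (2 * π * (R - β) - Real.eulerMascheroniConstant + 1
          + Real.eulerMascheroniConstant) = (R - β) + 1 / (2 * π) := by
        field_simp; ring
      have h8 := mul_le_mul_of_nonneg_left
        (add_le_add_right h5 Real.eulerMascheroniConstant)
        (show (0:ℝ) ≤ 1 / (2 * π) by positivity)
      linarith
    simp only [hF_def]
    have h9 : 0 < 1 / (2 * π) := by positivity
    simp only [hR_def] at h6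
    linarith
  -- existence by IVT
  have hκ₁κ₂ : κ₁ < κ₂ := by
    apply lt_of_lt_of_le _ hκ₂r
    simp only [hκ₁_def, hκr_def]; linarith
  have hsubset : Set.Icc κ₁ κ₂ ⊆ Set.Ioi (α / 2) := fun x hx =>
    lt_of_lt_of_le hκ₁mem hx.1
  have hcontOn : ContinuousOn F (Set.Icc κ₁ κ₂) := fun x hx =>
    (hcontAt x (hsubset hx)).continuousWithinAt
  have hivt := intermediate_value_Icc hκ₁κ₂.le hcontOn
  have h0mem : (0:ℝ) ∈ Set.Icc (F κ₁) (F κ₂) := ⟨hκ₁neg.le, hκ₂pos.le⟩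
  obtain ⟨κ, hκmem, hκeq⟩ := hivt h0mem
  refine ⟨κ, ⟨hsubset hκmem, hκeq⟩, ?_⟩
  rintro y ⟨hy, hyeq⟩
  exact hmono.injOn hy (hsubset hκmem) (hyeq.trans hκeq.symm)
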